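/- Let V be a finite-dimensional real inner product space, b ∈ V with ‖b‖ = 1, g, k ∈ ℝ with |g| < 2, h = √(1 − g²/4), and let q, v, A, B, λ be as in the Finsleroid setting. Define the Landsberg spray endomorphism G_y : V → V for q(y) > 0 by G_y(w) = (g·k/q(y))·[⟨v(y),w⟩·v(y) + q(y)²·(w − ⟨b,w⟩·b)]. Then for y₁, y₂ with q(y₁) > 0 and q(y₂) > 0, and every w ∈ V, the derivative of y ↦ λ(y, y₂) at y₁ applied to G_{y₁}(w) equals (g·k/q₁)·[ ((g/2)q₁A₂⟨v(y₁),w⟩ + h²q₁²⟨v(y₂),w⟩)/√(B₁B₂) − q₁λ(q₁ + (g/2)b₁)⟨v(y₁),w⟩/B₁ + λA₁b₁⟨v(y₁),w⟩/B₁ − A₂b₁⟨v(y₁),w⟩/√(B₁B₂) ], where qₐ = q(yₐ), bₐ = ⟨b,yₐ⟩, Aₐ = A(yₐ), Bₐ = B(yₐ), λ = λ(y₁,y₂). -/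

import Mathlib

open scoped InnerProductSpace

set_option maxHeartbeats 2000000 in
/-- In the Finsleroid setting with the Landsberg spray endomorphism
`G_y(w) = (g·k/q(y))·[⟨v(y),w⟩·v(y) + q(y)²·(w − ⟨b,w⟩·b)]`, the derivative of
`y ↦ λ(y, y₂)` at `y₁`, applied to `G_{y₁}(w)`, equals the stated explicit expression
(formula (A.17) of the paper). -/
theorem finsleroid_lambda_contracted_with_spray
    {V : Type*} [NormedAddCommGroup V] [InnerProductSpace ℝ V] [FiniteDimensional ℝ V]
    (b : V) (hb : ‖b‖ = 1) (g k h : ℝ) (hg : |g| < 2)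
    (hh : h = Real.sqrt (1 - g ^ 2 / 4))
    (q A B : V → ℝ) (v : V → V) (lam : V → V → ℝ) (G : V → V → V)
    (hq : ∀ y : V, q y = Real.sqrt (‖y‖ ^ 2 - ⟪b, y⟫_ℝ ^ 2))
    (hv : ∀ y : V, v y = y - ⟪b, y⟫_ℝ • b)
    (hA : ∀ y : V, A y = ⟪b, y⟫_ℝ + (g / 2) * q y)
    (hB : ∀ y : V, B y = ⟪b, y⟫_ℝ ^ 2 + g * ⟪b, y⟫_ℝ * q y + q y ^ 2)
    (hlam : ∀ y₁ y₂ : V, y₁ ≠ 0 → y₂ ≠ 0 →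
      lam y₁ y₂ = (A y₁ * A y₂ + h ^ 2 * (⟪y₁, y₂⟫_ℝ - ⟪b, y₁⟫_ℝ * ⟪b, y₂⟫_ℝ))
        / Real.sqrt (B y₁ * B y₂))
    (hG : ∀ y w : V,
      G y w = (g * k / q y) • (⟪v y, w⟫_ℝ • v y + (q y ^ 2) • (w - ⟪b, w⟫_ℝ • b))) :
    ∀ y₁ y₂ : V, 0 < q y₁ → 0 < q y₂ → ∀ w : V,
      fderiv ℝ (fun y => lam y y₂) y₁ (G y₁ w)
        = (g * k / q y₁)
            * (((g / 2) * q y₁ * A y₂ * ⟪v y₁, w⟫_ℝ + h ^ 2 * q y₁ ^ 2 * ⟪v y₂, w⟫_ℝ)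
                  / Real.sqrt (B y₁ * B y₂)
                - q y₁ * lam y₁ y₂ * (q y₁ + (g / 2) * ⟪b, y₁⟫_ℝ) * ⟪v y₁, w⟫_ℝ / B y₁
                + lam y₁ y₂ * A y₁ * ⟪b, y₁⟫_ℝ * ⟪v y₁, w⟫_ℝ / B y₁
                - A y₂ * ⟪b, y₁⟫_ℝ * ⟪v y₁, w⟫_ℝ / Real.sqrt (B y₁ * B y₂)) := by
  intro y₁ y₂ hq1 hq2 w
  have habs := abs_lt.mp hg
  have h2pos : (0:ℝ) < 1 - g ^ 2 / 4 := by nlinarith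
  have hbb : ⟪b, b⟫_ℝ = 1 := by
    rw [real_inner_self_eq_norm_sq, hb]; norm_num
  have hs1pos : 0 < ‖y₁‖ ^ 2 - ⟪b, y₁⟫_ℝ ^ 2 := Real.sqrt_pos.mp (by rw [← hq]; exact hq1)
  have hs2pos : 0 < ‖y₂‖ ^ 2 - ⟪b, y₂⟫_ℝ ^ 2 := Real.sqrt_pos.mp (by rw [← hq]; exact hq2)
  have hq1sq : q y₁ ^ 2 = ‖y₁‖ ^ 2 - ⟪b, y₁⟫_ℝ ^ 2 := by
    rw [hq]; exact Real.sq_sqrt hs1pos.le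
  have hy1 : y₁ ≠ 0 := by rintro rfl; simp at hs1pos
  have hy2 : y₂ ≠ 0 := by rintro rfl; simp at hs2pos
  have hB1pos : 0 < B y₁ := by
    rw [hB]
    nlinarith [sq_nonneg (⟪b, y₁⟫_ℝ + g / 2 * q y₁), mul_pos h2pos (mul_pos hq1 hq1)]
  have hB2pos : 0 < B y₂ := by
    rw [hB]
    nlinarith [sq_nonneg (⟪b, y₂⟫_ℝ + g / 2 * q y₂), mul_pos h2pos (mul_pos hq2 hq2)]
  have hrpos : 0 < Real.sqrt (B y₁ * B y₂) := Real.sqrt_pos.mpr (mul_pos hB1pos hB2pos)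
  have hr2 : Real.sqrt (B y₁ * B y₂) ^ 2 = B y₁ * B y₂ :=
    Real.sq_sqrt (mul_pos hB1pos hB2pos).le
  have hQ1 : Real.sqrt (⟪y₁, y₁⟫_ℝ - ⟪b, y₁⟫_ℝ * ⟪b, y₁⟫_ℝ) = q y₁ := by
    rw [hq]; congr 1; rw [real_inner_self_eq_norm_sq]; ring
  have hsne : ⟪y₁, y₁⟫_ℝ - ⟪b, y₁⟫_ℝ * ⟪b, y₁⟫_ℝ ≠ 0 := by
    rw [real_inner_self_eq_norm_sq]
    nlinarith
  have hBval : (⟪b, y₁⟫_ℝ * ⟪b, y₁⟫_ℝ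
      + g * (⟪b, y₁⟫_ℝ * Real.sqrt (⟪y₁, y₁⟫_ℝ - ⟪b, y₁⟫_ℝ * ⟪b, y₁⟫_ℝ))
      + Real.sqrt (⟪y₁, y₁⟫_ℝ - ⟪b, y₁⟫_ℝ * ⟪b, y₁⟫_ℝ)
        * Real.sqrt (⟪y₁, y₁⟫_ℝ - ⟪b, y₁⟫_ℝ * ⟪b, y₁⟫_ℝ)) = B y₁ := by
    rw [hQ1, hB]; ring
  have hdne : (⟪b, y₁⟫_ℝ * ⟪b, y₁⟫_ℝ
      + g * (⟪b, y₁⟫_ℝ * Real.sqrt (⟪y₁, y₁⟫_ℝ - ⟪b, y₁⟫_ℝ * ⟪b, y₁⟫_ℝ))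
      + Real.sqrt (⟪y₁, y₁⟫_ℝ - ⟪b, y₁⟫_ℝ * ⟪b, y₁⟫_ℝ)
        * Real.sqrt (⟪y₁, y₁⟫_ℝ - ⟪b, y₁⟫_ℝ * ⟪b, y₁⟫_ℝ)) * B y₂ ≠ 0 := by
    rw [hBval]; exact (mul_pos hB1pos hB2pos).ne'
  have hSval : Real.sqrt ((⟪b, y₁⟫_ℝ * ⟪b, y₁⟫_ℝ
      + g * (⟪b, y₁⟫_ℝ * Real.sqrt (⟪y₁, y₁⟫_ℝ - ⟪b, y₁⟫_ℝ * ⟪b, y₁⟫_ℝ))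
      + Real.sqrt (⟪y₁, y₁⟫_ℝ - ⟪b, y₁⟫_ℝ * ⟪b, y₁⟫_ℝ)
        * Real.sqrt (⟪y₁, y₁⟫_ℝ - ⟪b, y₁⟫_ℝ * ⟪b, y₁⟫_ℝ)) * B y₂)
      = Real.sqrt (B y₁ * B y₂) := by rw [hBval]
  have hSne : Real.sqrt ((⟪b, y₁⟫_ℝ * ⟪b, y₁⟫_ℝ
      + g * (⟪b, y₁⟫_ℝ * Real.sqrt (⟪y₁, y₁⟫_ℝ - ⟪b, y₁⟫_ℝ * ⟪b, y₁⟫_ℝ))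
      + Real.sqrt (⟪y₁, y₁⟫_ℝ - ⟪b, y₁⟫_ℝ * ⟪b, y₁⟫_ℝ)
        * Real.sqrt (⟪y₁, y₁⟫_ℝ - ⟪b, y₁⟫_ℝ * ⟪b, y₁⟫_ℝ)) * B y₂) ≠ 0 := by
    rw [hSval]; exact hrpos.ne'
  -- derivative construction
  have hI : HasFDerivAt (fun y : V => ⟪b, y⟫_ℝ) (innerSL ℝ b) y₁ := (innerSL ℝ b).hasFDerivAt
  have hJ : HasFDerivAt (fun y : V => ⟪y, y₂⟫_ℝ) (innerSL ℝ y₂) y₁ :=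
    (innerSL ℝ y₂).hasFDerivAt.congr_of_eventuallyEq
      (Filter.Eventually.of_forall fun y => by simp [real_inner_comm])
  have hK : HasFDerivAt (fun y : V => ⟪y, y⟫_ℝ) ((2:ℝ) • innerSL ℝ y₁) y₁ := by
    have h0 := (hasFDerivAt_id (𝕜 := ℝ) (x := y₁)).inner ℝ (hasFDerivAt_id (𝕜 := ℝ) (x := y₁))
    refine h0.congr_fderiv ?_
    ext u
    simp [fderivInnerCLM_apply, real_inner_comm, two_smul]
  have hs' := hK.sub (hI.mul hI)
  have hqD := hs'.sqrt hsne
  have hnum := ((hI.add (hqD.const_mul (g / 2))).mul_const (A y₂)).add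
    ((hJ.sub (hI.mul_const ⟪b, y₂⟫_ℝ)).const_mul (h ^ 2))
  have hden := (((hI.mul hI).add ((hI.mul hqD).const_mul g)).add (hqD.mul hqD)).mul_const (B y₂)
  have hdenS := hden.sqrt hdne
  have hinv := (hasDerivAt_inv hSne).comp_hasFDerivAt y₁ hdenS
  have hF := hnum.mul hinv
  -- `lam · y₂` agrees with the explicit function near y₁
  have hcont : Continuous fun y : V => ⟪y, y⟫_ℝ - ⟪b, y⟫_ℝ * ⟪b, y⟫_ℝ :=
    ((continuous_id.inner continuous_id)).sub
      (((continuous_const.inner continuous_id)).mul ((continuous_const.inner continuous_id)))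
  have hopen : IsOpen {y : V | 0 < ⟪y, y⟫_ℝ - ⟪b, y⟫_ℝ * ⟪b, y⟫_ℝ} :=
    isOpen_lt continuous_const hcont
  have hmem : y₁ ∈ {y : V | 0 < ⟪y, y⟫_ℝ - ⟪b, y⟫_ℝ * ⟪b, y⟫_ℝ} := by
    show 0 < ⟪y₁, y₁⟫_ℝ - ⟪b, y₁⟫_ℝ * ⟪b, y₁⟫_ℝ
    rw [real_inner_self_eq_norm_sq]; nlinarith
  have hEqv : (fun y : V => lam y y₂) =ᶠ[nhds y₁] (fun y : V =>
      ((⟪b, y⟫_ℝ + g / 2 * Real.sqrt (⟪y, y⟫_ℝ - ⟪b, y⟫_ℝ * ⟪b, y⟫_ℝ)) * A y₂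
        + h ^ 2 * (⟪y, y₂⟫_ℝ - ⟪b, y⟫_ℝ * ⟪b, y₂⟫_ℝ)) *
      (Real.sqrt ((⟪b, y⟫_ℝ * ⟪b, y⟫_ℝ
          + g * (⟪b, y⟫_ℝ * Real.sqrt (⟪y, y⟫_ℝ - ⟪b, y⟫_ℝ * ⟪b, y⟫_ℝ))
          + Real.sqrt (⟪y, y⟫_ℝ - ⟪b, y⟫_ℝ * ⟪b, y⟫_ℝ)
            * Real.sqrt (⟪y, y⟫_ℝ - ⟪b, y⟫_ℝ * ⟪b, y⟫_ℝ)) * B y₂))⁻¹) := by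
    filter_upwards [hopen.eventually_mem hmem] with y hy
    have hy' : (0:ℝ) < ⟪y, y⟫_ℝ - ⟪b, y⟫_ℝ * ⟪b, y⟫_ℝ := hy
    have hy0 : y ≠ 0 := by rintro rfl; simp at hy'
    have e1 : ‖y‖ ^ 2 - ⟪b, y⟫_ℝ ^ 2 = ⟪y, y⟫_ℝ - ⟪b, y⟫_ℝ * ⟪b, y⟫_ℝ := by
      rw [real_inner_self_eq_norm_sq]; ring
    rw [hlam y y₂ hy0 hy2, hA, hB, hq, e1, div_eq_mul_inv]
    congr 2
    ring
  have hkey := (hF.congr_of_eventuallyEq hEqv).fderiv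
  rw [hkey]
  -- inner products with the spray vector
  have hbw : ⟪b, G y₁ w⟫_ℝ = 0 := by
    rw [hG, hv]
    simp [inner_add_right, inner_smul_right, inner_sub_right, hbb, hb]
  have h1w : ⟪y₁, G y₁ w⟫_ℝ
      = 2 * g * k * q y₁ * (⟪y₁, w⟫_ℝ - ⟪b, y₁⟫_ℝ * ⟪b, w⟫_ℝ) := by
    rw [hG, hv]
    simp only [inner_add_right, inner_smul_right, inner_sub_right, inner_sub_left,
      real_inner_smul_left, real_inner_self_eq_norm_sq]
    rw [real_inner_comm b y₁]
    rw [show ‖y₁‖ ^ 2 = q y₁ ^ 2 + ⟪b, y₁⟫_ℝ ^ 2 by rw [hq1sq]; ring]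
    field_simp
    ring
  have h2w : ⟪y₂, G y₁ w⟫_ℝ
      = g * k / q y₁ * ((⟪y₁, w⟫_ℝ - ⟪b, y₁⟫_ℝ * ⟪b, w⟫_ℝ)
          * (⟪y₁, y₂⟫_ℝ - ⟪b, y₁⟫_ℝ * ⟪b, y₂⟫_ℝ)
        + q y₁ ^ 2 * (⟪y₂, w⟫_ℝ - ⟪b, y₂⟫_ℝ * ⟪b, w⟫_ℝ)) := by
    rw [hG, hv]
    simp only [inner_add_right, inner_smul_right, inner_sub_right, inner_sub_left,
      real_inner_smul_left]
    rw [real_inner_comm b y₂, real_inner_comm y₁ y₂]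
    ring
  simp only [Function.comp_apply, Pi.add_apply, Pi.sub_apply, Pi.mul_apply]
  rw [hSval, hQ1, hr2]
  simp only [ContinuousLinearMap.add_apply, ContinuousLinearMap.sub_apply,
    ContinuousLinearMap.smul_apply, innerSL_apply_apply, smul_eq_mul]
  rw [hbw, h1w, h2w]
  rw [hlam y₁ y₂ hy1 hy2, hA y₁]
  rw [hv y₁, hv y₂]
  simp only [inner_sub_left, real_inner_smul_left]
  have hBe := hB y₁
  have hB1pos' : 0 < ⟪b, y₁⟫_ℝ ^ 2 + g * ⟪b, y₁⟫_ℝ * q y₁ + q y₁ ^ 2 := by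
    rw [← hBe]; exact hB1pos
  have hrpos' : 0 < Real.sqrt ((⟪b, y₁⟫_ℝ ^ 2 + g * ⟪b, y₁⟫_ℝ * q y₁ + q y₁ ^ 2) * B y₂) := by
    rw [← hBe]; exact hrpos
  rw [hBe]
  have hS0 := hrpos'.ne'
  have hD0 := hB1pos'.ne'
  generalize Real.sqrt ((⟪b, y₁⟫_ℝ ^ 2 + g * ⟪b, y₁⟫_ℝ * q y₁ + q y₁ ^ 2) * B y₂) = S at hS0 ⊢
  generalize hDdef : ⟪b, y₁⟫_ℝ ^ 2 + g * ⟪b, y₁⟫_ℝ * q y₁ + q y₁ ^ 2 = D at hD0 ⊢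
  field_simp
  subst hDdef
  ring
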